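/- arXiv:2508.03930 — 2 statements merged into one kernel-verified Lean document; each statement's English description precedes it below -/
import Mathlib

section
/- A square U^2 occurring in T is special (U is primitive and per(U) ≤ |U|/4) if and only if there exist neighboring runs F, F' of equal period per(U) in T and a layer R of the pyramid P(F,F') such that U^2 is generated by R ∩ (F ∪ F'). -/
open List

variable {α : Type*}

/-- `frag T a b` is the fragment `T[a..b]` (inclusive, 0-based). -/
def frag (T : List α) (a b : ℕ) : List α := (T.drop a).take (b + 1 - a)

/-- `p` is a period of `S`: `0 < p ≤ |S|` and `S[i] = S[i+p]` for all valid `i`. -/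
def IsPeriodOf (p : ℕ) (S : List α) : Prop :=
  0 < p ∧ p ≤ S.length ∧ ∀ i : ℕ, i + p < S.length → S[i]? = S[i + p]?

/-- The smallest period of `S`. -/
noncomputable def minPeriod (S : List α) : ℕ := sInf {p | IsPeriodOf p S}

/-- `T[a..b]` is a run: periodic (its smallest period occurs at least twice)
and maximal on both sides. -/
def IsRun (T : List α) (a b : ℕ) : Prop :=
  a ≤ b ∧ b < T.length ∧
  2 * minPeriod (frag T a b) ≤ b + 1 - a ∧
  (a = 0 ∨ T[a - 1]? ≠ T[a - 1 + minPeriod (frag T a b)]?) ∧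
  (b = T.length - 1 ∨ T[b + 1]? ≠ T[b + 1 - minPeriod (frag T a b)]?)

/-- `W` occurs in `T` at position `s`. -/
def OccursAt (T : List α) (s : ℕ) (W : List α) : Prop :=
  s + W.length ≤ T.length ∧ (T.drop s).take W.length = W

/-- The set of distinct square substrings of `T`. -/
def Squares (T : List α) : Set (List α) :=
  {W | ∃ X : List α, X ≠ [] ∧ W = X ++ X ∧ W <:+: T}

/-- A non-empty string is primitive if it is not a proper power. -/
def Primitive (U : List α) : Prop :=
  U ≠ [] ∧ ∀ (V : List α) (k : ℕ), U = (List.replicate k V).flatten → k = 1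

/-- Cyclic rotation moving the first `c` characters to the end. -/
def rot (c : ℕ) (L : List α) : List α := L.drop c ++ L.take c

/-- `lam` is the Lyndon root of a periodic string `S`: the lexicographically
smallest rotation of `S[0..per(S))`. -/
def LyndonRootOf [LinearOrder α] (S lam : List α) : Prop :=
  (∃ c < minPeriod S, lam = rot c (S.take (minPeriod S))) ∧
  ∀ c < minPeriod S, lam ≤ rot c (S.take (minPeriod S))

/-- Squares generated by a periodic string `U`: squares contained in `U`
whose smallest period equals that of `U`. -/
def FragSquares (U : List α) : Set (List α) :=
  {W | ∃ X : List α, X ≠ [] ∧ W = X ++ X ∧ W <:+: U ∧ minPeriod W = minPeriod U}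

/-- `subper U`: the minimum of `per(X)` over squares `X²` generated by `U`. -/
noncomputable def subper (U : List α) : ℕ :=
  sInf {q | ∃ X : List α, X ≠ [] ∧ (X ++ X) <:+: U ∧
    minPeriod (X ++ X) = minPeriod U ∧ minPeriod X = q}

/-- Fragments `[a..b]` and `[a'..b']` are neighboring:
`[a-1..b+1] ∩ [a'..b'] ≠ ∅`. -/
def Neighboring (a b a' b' : ℕ) : Prop := a ≤ b' + 1 ∧ a' ≤ b + 1

/-- `T[x..y]` is a layer of the pyramid of the neighboring runs
`F = T[a..b]` and `F' = T[a'..b']` (with `a < a'`): a subperiodic run `R`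
with `subper(R) = per(F)` such that `R ∩ (F ∪ F')` is periodic with
period `per(R)`. -/
def IsLayer (T : List α) (a b a' b' x y : ℕ) : Prop :=
  IsRun T x y ∧
  4 * subper (frag T x y) ≤ minPeriod (frag T x y) ∧
  subper (frag T x y) = minPeriod (frag T a b) ∧
  2 * minPeriod (frag T x y) ≤ min y b' + 1 - max x a ∧
  IsPeriodOf (minPeriod (frag T x y)) (frag T (max x a) (min y b'))

/-- A `τ`-synchronizing set of `T` (Kempa–Kociumaka): consistency and density. -/
def SyncSet (T : List α) (τ : ℕ) (S : Set ℕ) : Prop :=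
  (∀ i ∈ S, i + 2 * τ ≤ T.length) ∧
  (∀ i j : ℕ, i + 2 * τ ≤ T.length → j + 2 * τ ≤ T.length →
    (T.drop i).take (2 * τ) = (T.drop j).take (2 * τ) → (i ∈ S ↔ j ∈ S)) ∧
  (∀ i : ℕ, i + 3 * τ - 1 ≤ T.length →
    ((∀ k ∈ S, k < i ∨ i + τ ≤ k) ↔
      3 * minPeriod ((T.drop i).take (3 * τ - 1)) ≤ τ))

section AuxBasics
variable {α : Type*}

/-- Period as a statement about `T` on an inclusive index interval `[lo, hi]`. -/
def PerOn (T : List α) (p lo hi : ℕ) : Prop :=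
  ∀ i, lo ≤ i → i + p ≤ hi → T[i]? = T[i + p]?

lemma perOn_mono {T : List α} {p lo hi lo' hi' : ℕ} (h : PerOn T p lo hi)
    (h1 : lo ≤ lo') (h2 : hi' ≤ hi) : PerOn T p lo' hi' :=
  fun i ha hb => h i (le_trans h1 ha) (le_trans hb h2)

lemma frag_length {T : List α} {a b : ℕ} (h : b < T.length) :
    (frag T a b).length = b + 1 - a := by
  simp only [frag, List.length_take, List.length_drop]
  omega

lemma frag_get? {T : List α} {a b i : ℕ} (h : i < b + 1 - a) :
    (frag T a b)[i]? = T[a + i]? := by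
  rw [frag, List.getElem?_take_of_lt h, List.getElem?_drop]

lemma isPeriodOf_frag_iff {T : List α} {p a b : ℕ} (hab : a ≤ b) (hb : b < T.length) :
    IsPeriodOf p (frag T a b) ↔ 0 < p ∧ p ≤ b + 1 - a ∧ PerOn T p a b := by
  unfold IsPeriodOf PerOn
  rw [frag_length hb]
  constructor
  · rintro ⟨h1, h2, h3⟩
    refine ⟨h1, h2, fun i hlo hhi => ?_⟩
    have := h3 (i - a) (by omega)
    rwa [frag_get? (by omega), frag_get? (by omega), show a + (i - a) = i by omega,
      show a + (i - a + p) = i + p by omega] at this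
  · rintro ⟨h1, h2, h3⟩
    refine ⟨h1, h2, fun i hi => ?_⟩
    rw [frag_get? (by omega), frag_get? (by omega)]
    have := h3 (a + i) (by omega) (by omega)
    rwa [show a + i + p = a + (i + p) by omega] at this

lemma isPeriodOf_length {S : List α} (h : S ≠ []) : IsPeriodOf S.length S :=
  ⟨List.length_pos_iff.mpr h, le_rfl, fun _ hi => absurd hi (by omega)⟩

lemma minPeriod_isPeriodOf {S : List α} (h : S ≠ []) : IsPeriodOf (minPeriod S) S := by
  have h2 : S.length ∈ {p | IsPeriodOf p S} := isPeriodOf_length h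
  exact Nat.sInf_mem ⟨_, h2⟩

lemma minPeriod_le {S : List α} {p : ℕ} (h : IsPeriodOf p S) : minPeriod S ≤ p :=
  Nat.sInf_le h

lemma minPeriod_pos {S : List α} (h : S ≠ []) : 0 < minPeriod S :=
  (minPeriod_isPeriodOf h).1

lemma minPeriod_le_length {S : List α} (h : S ≠ []) : minPeriod S ≤ S.length :=
  (minPeriod_isPeriodOf h).2.1

lemma IsPeriodOf.get?_add_mul {S : List α} {p : ℕ} (h : IsPeriodOf p S) (i k : ℕ)
    (hk : i + k * p < S.length) : S[i]? = S[i + k * p]? := by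
  induction k with
  | zero => simp
  | succ k ih =>
    have e : i + (k + 1) * p = i + k * p + p := by ring
    rw [e] at hk ⊢
    rw [ih (by omega), h.2.2 _ hk]

lemma IsPeriodOf.get?_congr {S : List α} {p : ℕ} (h : IsPeriodOf p S) {i j : ℕ}
    (hij : i % p = j % p) (hi : i < S.length) (hj : j < S.length) :
    S[i]? = S[j]? := by
  rcases le_total i j with hle | hle
  · obtain ⟨c, hc⟩ : p ∣ j - i := (Nat.modEq_iff_dvd' hle).mp hij
    have hk : j = i + c * p := by rw [mul_comm]; omega
    rw [hk] at hj ⊢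
    exact h.get?_add_mul i c hj
  · obtain ⟨c, hc⟩ : p ∣ i - j := (Nat.modEq_iff_dvd' hle).mp hij.symm
    have hk : i = j + c * p := by rw [mul_comm]; omega
    rw [hk] at hi ⊢
    exact (h.get?_add_mul j c hi).symm

lemma window_length {S : List α} {d L : ℕ} (h : d + L ≤ S.length) :
    ((S.drop d).take L).length = L := by
  simp only [List.length_take, List.length_drop]; omega

lemma window_get? {S : List α} {d L i : ℕ} (h : i < L) :
    ((S.drop d).take L)[i]? = S[d + i]? := by
  rw [List.getElem?_take_of_lt h, List.getElem?_drop]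

lemma window_period {S : List α} {p d L : ℕ} (hp : IsPeriodOf p S)
    (hd : d + L ≤ S.length) (hpL : p ≤ L) : IsPeriodOf p ((S.drop d).take L) := by
  refine ⟨hp.1, by rw [window_length hd]; exact hpL, fun i hi => ?_⟩
  rw [window_length hd] at hi
  rw [window_get? (by omega), window_get? hi, ← Nat.add_assoc]
  exact hp.2.2 _ (by omega)

lemma window_infix {S : List α} (d L : ℕ) (h : d + L ≤ S.length) :
    (S.drop d).take L <:+: S := by
  refine ⟨S.take d, S.drop (d + L), ?_⟩
  have h1 : S.drop (d + L) = (S.drop d).drop L := by rw [List.drop_drop]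
  rw [List.append_assoc, h1, List.take_append_drop, List.take_append_drop]

lemma infix_window {S W : List α} (h : W <:+: S) :
    ∃ d, d + W.length ≤ S.length ∧ (S.drop d).take W.length = W := by
  obtain ⟨t, u, ht⟩ := h
  refine ⟨t.length, by simp only [← ht, List.length_append]; omega, ?_⟩
  rw [← ht, List.append_assoc, List.drop_left, List.take_left]

end AuxBasics

section AuxFW
variable {α : Type*}

lemma period_of_take_period {S : List α} {q g : ℕ} (hq : IsPeriodOf q S)
    (hg : 0 < g) (hdvd : g ∣ q)
    (hpre : ∀ r, r + g < q → S[r]? = S[r + g]?) : IsPeriodOf g S := by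
  have hq0 := hq.1
  have hqS := hq.2.1
  have key : ∀ r, r < q → S[r]? = S[r % g]? := by
    intro r
    induction r using Nat.strong_induction_on with
    | _ r ih =>
      intro hr
      by_cases hrg : r < g
      · rw [Nat.mod_eq_of_lt hrg]
      · push_neg at hrg
        have h1 : S[r - g]? = S[r]? := by
          have := hpre (r - g) (by omega)
          rwa [show r - g + g = r by omega] at this
        rw [← h1, ih (r - g) (by omega) (by omega), ← Nat.mod_eq_sub_mod hrg]
  refine ⟨hg, le_trans (Nat.le_of_dvd hq0 hdvd) hqS, fun i hi => ?_⟩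
  have hgq : g ≤ q := Nat.le_of_dvd hq0 hdvd
  have h1 : S[i]? = S[i % q]? :=
    hq.get?_congr (Nat.mod_mod_of_dvd i dvd_rfl).symm (by omega) (lt_of_lt_of_le (Nat.mod_lt _ hq0) hqS)
  have h2 : S[i + g]? = S[(i + g) % q]? :=
    hq.get?_congr (Nat.mod_mod_of_dvd _ dvd_rfl).symm hi (lt_of_lt_of_le (Nat.mod_lt _ hq0) hqS)
  rw [h1, h2, key _ (Nat.mod_lt _ hq0), key _ (Nat.mod_lt _ hq0)]
  congr 1
  calc i % q % g = i % g := Nat.mod_mod_of_dvd i hdvd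
    _ = (i + g) % g := (Nat.add_mod_right i g).symm
    _ = (i + g) % q % g := (Nat.mod_mod_of_dvd _ hdvd).symm

lemma period_of_window_period {S : List α} {q g d L : ℕ} (hq : IsPeriodOf q S)
    (hg : 0 < g) (hdvd : g ∣ q) (hdL : d + L ≤ S.length) (hL : q + g ≤ L)
    (hw : IsPeriodOf g ((S.drop d).take L)) : IsPeriodOf g S := by
  have hq0 := hq.1
  have hqS := hq.2.1
  apply period_of_take_period hq hg hdvd
  intro r hr
  set j := d + ((r + (q - d % q)) % q) with hj
  have hmod : d % q < q := Nat.mod_lt _ hq0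
  have hjlt : j < d + q := by
    have := Nat.mod_lt (r + (q - d % q)) hq0
    omega
  have hdmod := Nat.div_add_mod d q
  have harith : r + (q - d % q) + d = r + q + q * (d / q) := by omega
  have hjr : j % q = r % q := by
    rw [hj]
    conv_lhs => rw [Nat.add_comm d]
    rw [Nat.mod_add_mod, harith, Nat.add_mul_mod_self_left, Nat.add_mod_right]
  have hr1 : S[r]? = S[j]? :=
    hq.get?_congr (by rw [hjr]) (by omega) (by omega)
  have hr2 : S[r + g]? = S[j + g]? := by
    refine hq.get?_congr ?_ (by omega) (by omega)
    rw [Nat.add_mod r, Nat.add_mod j, hjr]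
  have hwlen : ((S.drop d).take L).length = L := window_length hdL
  have hw1 : ((S.drop d).take L)[j - d]? = S[j]? := by
    rw [window_get? (by omega), show d + (j - d) = j by omega]
  have hw2 : ((S.drop d).take L)[j - d + g]? = S[j + g]? := by
    rw [window_get? (by omega), show d + (j - d + g) = j + g by omega]
  have hstep : ((S.drop d).take L)[j - d]? = ((S.drop d).take L)[j - d + g]? :=
    hw.2.2 _ (by omega)
  rw [hr1, hr2, ← hw1, ← hw2, hstep]

lemma fine_wilf_aux : ∀ n p q : ℕ, ∀ S : List α, p + q ≤ n → q ≤ p →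
    IsPeriodOf p S → IsPeriodOf q S →
    p + q - Nat.gcd p q ≤ S.length → IsPeriodOf (Nat.gcd p q) S := by
  intro n
  induction n using Nat.strong_induction_on with
  | _ n ih =>
    intro p q S hn hqp hp hq hlen
    rcases eq_or_lt_of_le hqp with rfl | hlt
    · rwa [Nat.gcd_self]
    have hq0 := hq.1
    have hp0 := hp.1
    set g := Nat.gcd p q with hgdef
    have hg0 : 0 < g := Nat.gcd_pos_of_pos_right _ hq0
    have hgp : g ∣ p := Nat.gcd_dvd_left _ _
    have hgq : g ∣ q := Nat.gcd_dvd_right _ _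
    have hgpq : g ∣ p - q := Nat.dvd_sub hgp hgq
    have hgle : g ≤ p - q := Nat.le_of_dvd (by omega) hgpq
    have hgleq : g ≤ q := Nat.le_of_dvd hq0 hgq
    -- so p ≥ q + g
    set S' := S.take (S.length - q) with hS'
    have hSlen : q ≤ S.length := hq.2.1
    have hS'len : S'.length = S.length - q := by
      simp only [hS', List.length_take]; omega
    have hS'get : ∀ i, i < S.length - q → S'[i]? = S[i]? := by
      intro i hi
      rw [hS', List.getElem?_take_of_lt hi]
    have hq' : IsPeriodOf q S' := by
      refine ⟨hq0, by rw [hS'len]; omega, fun i hi => ?_⟩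
      rw [hS'len] at hi
      rw [hS'get _ (by omega), hS'get _ (by omega)]
      exact hq.2.2 _ (by omega)
    have hp' : IsPeriodOf (p - q) S' := by
      refine ⟨by omega, by rw [hS'len]; omega, fun i hi => ?_⟩
      rw [hS'len] at hi
      rw [hS'get _ (by omega), hS'get _ (by omega)]
      have e1 : S[i + (p - q)]? = S[i + (p - q) + q]? := hq.2.2 _ (by omega)
      have e2 : S[i]? = S[i + p]? := hp.2.2 _ (by omega)
      rw [e1, show i + (p - q) + q = i + p by omega, ← e2]
    have hgcd' : Nat.gcd (p - q) q = g := by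
      rw [hgdef, Nat.gcd_comm (p-q) q, Nat.gcd_comm p q, Nat.gcd_rec q p, Nat.gcd_rec q (p - q)]
      congr 1
      rw [Nat.mod_eq_sub_mod (le_of_lt hlt)]
    have hg' : IsPeriodOf g S' := by
      have hlen' : (p - q) + q - Nat.gcd (p - q) q ≤ S'.length := by
        rw [hS'len, hgcd']; omega
      rcases le_total q (p - q) with hc | hc
      · have := ih p (by omega) (p - q) q S' (by omega) hc hp' hq' hlen'
        rwa [hgcd'] at this
      · have := ih p (by omega) q (p - q) S' (by omega) hc hq' hp'
          (by rw [Nat.gcd_comm, Nat.add_comm]; exact hlen')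
        rwa [Nat.gcd_comm, hgcd'] at this
    apply period_of_take_period hq hg0 hgq
    intro r hrg
    have hrS' : r + g < S'.length := by rw [hS'len]; omega
    rw [← hS'get _ (by omega), ← hS'get _ (by omega)]
    exact hg'.2.2 r (by omega)

lemma fine_wilf {S : List α} {p q : ℕ} (hp : IsPeriodOf p S) (hq : IsPeriodOf q S)
    (hlen : p + q - Nat.gcd p q ≤ S.length) : IsPeriodOf (Nat.gcd p q) S := by
  rcases le_total q p with h | h
  · exact fine_wilf_aux (p + q) p q S le_rfl h hp hq hlen
  · rw [Nat.gcd_comm]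
    exact fine_wilf_aux (p + q) q p S (by omega) h hq hp (by rw [Nat.gcd_comm]; omega)

end AuxFW

section AuxPrim
variable {α : Type*}

lemma join_cons' (a : List α) (l : List (List α)) : (a :: l).flatten = a ++ l.flatten := rfl

lemma join_replicate_length (V : List α) (k : ℕ) :
    ((List.replicate k V).flatten).length = k * V.length := by
  induction k with
  | zero => simp
  | succ k ih =>
    rw [List.replicate_succ, join_cons', List.length_append, ih]
    ring

lemma join_replicate_get? (V : List α) (k i : ℕ) (h : i < k * V.length) :
    ((List.replicate k V).flatten)[i]? = V[i % V.length]? := by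
  induction k generalizing i with
  | zero => omega
  | succ k ihk =>
    rw [List.replicate_succ, join_cons']
    by_cases hi : i < V.length
    · rw [List.getElem?_append_left hi, Nat.mod_eq_of_lt hi]
    · push_neg at hi
      have hV : V.length ≠ 0 := by
        rintro h0
        rw [h0, Nat.mul_zero] at h
        omega
      have hlt : i - V.length < k * V.length := by
        have : (k + 1) * V.length = k * V.length + V.length := by ring
        omega
      rw [List.getElem?_append_right hi, ihk _ hlt, ← Nat.mod_eq_sub_mod hi]

lemma join_replicate_period {V : List α} (hV : V ≠ []) (k : ℕ) (hk : 1 ≤ k) :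
    IsPeriodOf V.length ((List.replicate k V).flatten) := by
  have hV0 : 0 < V.length := List.length_pos_iff.mpr hV
  refine ⟨hV0, by rw [join_replicate_length]; nlinarith, fun i hi => ?_⟩
  rw [join_replicate_length] at hi
  rw [join_replicate_get? _ _ _ (by omega), join_replicate_get? _ _ _ hi,
    Nat.add_mod_right]

lemma eq_join_replicate_of_period {S : List α} {m : ℕ} (h : IsPeriodOf m S)
    (hd : m ∣ S.length) : S = (List.replicate (S.length / m) (S.take m)).flatten := by
  have hm0 := h.1
  have hmS := h.2.1
  have htl : (S.take m).length = m := by simp [List.length_take]; omega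
  have hJ : (S.length / m) * (S.take m).length = S.length := by
    rw [htl, Nat.div_mul_cancel hd]
  apply List.ext_getElem?
  intro i
  by_cases hi : i < S.length
  · rw [join_replicate_get? _ _ _ (by rw [hJ]; exact hi), htl, List.getElem?_take_of_lt (by exact Nat.mod_lt _ hm0)]
    exact h.get?_congr (Nat.mod_mod_of_dvd i dvd_rfl).symm hi (lt_of_lt_of_le (Nat.mod_lt i hm0) hmS)
  · rw [List.getElem?_eq_none_iff.mpr (by omega), List.getElem?_eq_none_iff.mpr]
    rw [join_replicate_length, htl, Nat.div_mul_cancel hd]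
    omega

lemma append_self_period {U : List α} (h : U ≠ []) : IsPeriodOf U.length (U ++ U) := by
  refine ⟨List.length_pos_iff.mpr h, by simp, fun i hi => ?_⟩
  simp only [List.length_append] at hi
  rw [List.getElem?_append_left (by omega), List.getElem?_append_right (by omega)]
  congr 1
  omega

lemma sq_take_eq (U : List α) : (U ++ U).take U.length = U := List.take_left (l₁ := U) (l₂ := U)

lemma period_of_sq_period {U : List α} {p : ℕ} (hU : U ≠ []) (hp : IsPeriodOf p (U ++ U))
    (hple : p ≤ U.length) : IsPeriodOf p U := by
  have := window_period (d := 0) (L := U.length) hp (by simp) hple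
  rwa [List.drop_zero, sq_take_eq] at this

lemma minPeriod_sq_le {U : List α} (h : U ≠ []) : minPeriod (U ++ U) ≤ U.length :=
  minPeriod_le (append_self_period h)

lemma sq_period_of_period_dvd {U : List α} {g : ℕ} (hU : U ≠ []) (hg : IsPeriodOf g U)
    (hdvd : g ∣ U.length) : IsPeriodOf g (U ++ U) := by
  have hg0 := hg.1
  have hgU := hg.2.1
  have hsq : ∀ j, j < U.length + U.length → (U ++ U)[j]? = U[j % U.length]? := by
    intro j hj
    by_cases h1 : j < U.length
    · rw [List.getElem?_append_left h1, Nat.mod_eq_of_lt h1]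
    · push_neg at h1
      rw [List.getElem?_append_right h1, Nat.mod_eq_sub_mod h1, Nat.mod_eq_of_lt (by omega)]
  refine ⟨hg0, by simp; omega, fun i hi => ?_⟩
  simp only [List.length_append] at hi
  rw [hsq _ (by omega), hsq _ hi]
  have hU0 : 0 < U.length := List.length_pos_iff.mpr hU
  apply hg.get?_congr ?_ (Nat.mod_lt _ hU0) (Nat.mod_lt _ hU0)
  rw [Nat.mod_mod_of_dvd _ hdvd, Nat.mod_mod_of_dvd _ hdvd, Nat.add_mod_right]

lemma minPeriod_sq_dvd {U : List α} (hU : U ≠ []) : minPeriod (U ++ U) ∣ U.length := by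
  have hUU : (U ++ U) ≠ [] := by simp [hU]
  set m := minPeriod (U ++ U) with hm
  have hmper := minPeriod_isPeriodOf hUU
  have hmle : m ≤ U.length := minPeriod_sq_le hU
  have hgcd := fine_wilf hmper (append_self_period hU) (by rw [List.length_append]; omega)
  have : Nat.gcd m U.length = m := le_antisymm (Nat.gcd_le_left _ hmper.1) (minPeriod_le hgcd)
  rw [← this]
  exact Nat.gcd_dvd_right _ _

lemma primitive_iff_minPeriod_sq {U : List α} (hU : U ≠ []) :
    Primitive U ↔ minPeriod (U ++ U) = U.length := by
  have hUU : (U ++ U) ≠ [] := by simp [hU]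
  have hU0 : 0 < U.length := List.length_pos_iff.mpr hU
  set m := minPeriod (U ++ U) with hm
  have hmper := minPeriod_isPeriodOf hUU
  have hm0 : 0 < m := hmper.1
  have hmle : m ≤ U.length := minPeriod_sq_le hU
  have hmdvd : m ∣ U.length := minPeriod_sq_dvd hU
  constructor
  · intro hprim
    have hUper : IsPeriodOf m U := period_of_sq_period hU hmper hmle
    have hrep := eq_join_replicate_of_period hUper hmdvd
    have hk := hprim.2 _ _ hrep
    have := Nat.div_mul_cancel hmdvd
    rw [hk] at this
    omega
  · intro hmlen
    refine ⟨hU, fun V k hk => ?_⟩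
    rcases Nat.eq_zero_or_pos k with rfl | hk0
    · simp at hk
      exact absurd hk hU
    have hlen : U.length = k * V.length := by rw [hk, join_replicate_length]
    have hV : V ≠ [] := by
      rintro rfl
      simp at hlen
      exact hU hlen
    by_contra hk1
    have hk2 : 2 ≤ k := by omega
    have hUU2 : U ++ U = (List.replicate (2 * k) V).flatten := by
      rw [hk, ← List.flatten_append, ← List.replicate_add, two_mul]
    have hper : IsPeriodOf V.length (U ++ U) := by
      rw [hUU2]
      exact join_replicate_period hV _ (by omega)
    have := minPeriod_le hper
    rw [← hm, hmlen] at this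
    have hV0 : 0 < V.length := List.length_pos_iff.mpr hV
    nlinarith

end AuxPrim

section AuxRot
variable {α : Type*}

lemma rot_length (c : ℕ) (L : List α) : (rot c L).length = L.length := by
  simp only [rot, List.length_append, List.length_take, List.length_drop]
  omega

lemma rot_zero (L : List α) : rot 0 L = L := by simp [rot]

lemma rot_get? {c i : ℕ} {L : List α} (hc : c ≤ L.length) (hi : i < L.length) :
    (rot c L)[i]? = L[(i + c) % L.length]? := by
  unfold rot
  by_cases h : i < L.length - c
  · rw [List.getElem?_append_left (by rw [List.length_drop]; omega), List.getElem?_drop,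
      Nat.mod_eq_of_lt (by omega)]
    congr 1
    omega
  · rw [List.getElem?_append_right (by rw [List.length_drop]; omega),
      List.getElem?_take_of_lt (by rw [List.length_drop]; omega),
      Nat.mod_eq_sub_mod (by omega), Nat.mod_eq_of_lt (by omega)]
    congr 1
    rw [List.length_drop]
    omega

lemma rot_rot {c c' : ℕ} {L : List α} (hc : c ≤ L.length) (hc' : c' ≤ L.length) :
    rot c' (rot c L) = rot ((c' + c) % L.length) L := by
  rcases eq_or_ne L [] with rfl | hL
  · simp [rot]
  have h0 : 0 < L.length := List.length_pos_iff.mpr hL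
  apply List.ext_getElem?
  intro i
  by_cases hi : i < L.length
  · rw [rot_get? (by rw [rot_length]; exact hc') (by rw [rot_length]; exact hi),
      rot_length, rot_get? hc (Nat.mod_lt _ h0),
      rot_get? (le_of_lt (Nat.mod_lt _ h0)) hi, Nat.mod_add_mod]
    conv_rhs => rw [Nat.add_comm i, Nat.mod_add_mod]
    ring_nf
  · rw [List.getElem?_eq_none_iff.mpr (by rw [rot_length, rot_length]; omega),
      List.getElem?_eq_none_iff.mpr (by rw [rot_length]; omega)]

lemma rot_inv {c : ℕ} {L : List α} (hc : c ≤ L.length) (hL : L ≠ []) :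
    rot ((L.length - c) % L.length) (rot c L) = L := by
  have h0 : 0 < L.length := List.length_pos_iff.mpr hL
  rw [rot_rot hc (le_of_lt (Nat.mod_lt _ h0)), Nat.mod_add_mod,
    show L.length - c + c = L.length by omega, Nat.mod_self, rot_zero]

lemma window_eq_rot {S : List α} {q d : ℕ} (hq : IsPeriodOf q S) (hd : d + q ≤ S.length) :
    (S.drop d).take q = rot (d % q) (S.take q) := by
  have hq0 := hq.1
  have hqS := hq.2.1
  have hlen : (S.take q).length = q := by rw [List.length_take]; omega
  apply List.ext_getElem?
  intro i
  by_cases hi : i < q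
  · rw [window_get? hi, rot_get? (by rw [hlen]; exact le_of_lt (Nat.mod_lt _ hq0))
      (by rw [hlen]; exact hi), hlen, List.getElem?_take_of_lt (Nat.mod_lt _ hq0)]
    apply hq.get?_congr ?_ (by omega) (lt_of_lt_of_le (Nat.mod_lt _ hq0) hqS)
    rw [Nat.mod_mod_of_dvd _ dvd_rfl]
    conv_rhs => rw [Nat.add_comm i, Nat.mod_add_mod]
  · rw [List.getElem?_eq_none_iff.mpr (by rw [window_length hd]; omega),
      List.getElem?_eq_none_iff.mpr (by rw [rot_length, hlen]; omega)]

end AuxRot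

section AuxRun
variable {α : Type*}

lemma exists_run_extension (T : List α) (s e q : ℕ) (hse : s ≤ e) (he : e < T.length)
    (hq : IsPeriodOf q (frag T s e)) (hmin : minPeriod (frag T s e) = q)
    (h2 : 2 * q ≤ e + 1 - s) :
    ∃ a b : ℕ, a ≤ s ∧ e ≤ b ∧ IsRun T a b ∧ minPeriod (frag T a b) = q ∧ PerOn T q a b := by
  classical
  have hq0 : 0 < q := hq.1
  have hqlen : q ≤ e + 1 - s := by
    have := hq.2.1
    rwa [frag_length he] at this
  have hPer0 : PerOn T q s e := ((isPeriodOf_frag_iff hse he).mp hq).2.2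
  -- right extension
  set Q : ℕ → Prop := fun d => s + d < T.length ∧ PerOn T q s (s + d) with hQ
  set d1 : ℕ := Nat.findGreatest Q T.length with hd1
  have hQ0 : Q (e - s) := ⟨by omega, by rwa [show s + (e - s) = e by omega]⟩
  have hd1ge : e - s ≤ d1 := Nat.le_findGreatest (by omega) hQ0
  have hQd1 : Q d1 := Nat.findGreatest_spec (m := e - s) (by omega) hQ0
  set b : ℕ := s + d1 with hb
  have hbT : b < T.length := hQd1.1
  have hbe : e ≤ b := by omega
  have hPerb : PerOn T q s b := hQd1.2
  have hbmax : b = T.length - 1 ∨ T[b + 1]? ≠ T[b + 1 - q]? := by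
    by_cases hbl : b = T.length - 1
    · exact Or.inl hbl
    right
    have hb1 : b + 1 < T.length := by omega
    have hnQ : ¬ (s + (d1 + 1) < T.length ∧ PerOn T q s (s + (d1 + 1))) :=
      Nat.findGreatest_is_greatest (P := Q) (n := T.length) (by omega) (by omega)
    have hnP : ¬ PerOn T q s (b + 1) := by
      intro hP
      exact hnQ ⟨by omega, by rwa [show s + (d1 + 1) = b + 1 by omega]⟩
    unfold PerOn at hnP
    push_neg at hnP
    obtain ⟨i, hi1, hi2, hi3⟩ := hnP
    have hieq : i + q = b + 1 := by
      by_contra hne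
      exact hi3 (hPerb i hi1 (by omega))
    intro hcon
    apply hi3
    rw [show i = b + 1 - q by omega]
    rw [show b + 1 - q + q = b + 1 by omega]
    exact hcon.symm
  -- left extension
  set Q' : ℕ → Prop := fun d => PerOn T q (s - d) b with hQ'
  set d2 : ℕ := Nat.findGreatest Q' s with hd2
  have hQ'0 : Q' 0 := by
    show PerOn T q (s - 0) b
    simpa using hPerb
  have hQd2 : Q' d2 := Nat.findGreatest_spec (m := 0) (by omega) hQ'0
  set a : ℕ := s - d2 with ha
  have has : a ≤ s := by omega
  have hPera : PerOn T q a b := hQd2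
  have hamax : a = 0 ∨ T[a - 1]? ≠ T[a - 1 + q]? := by
    by_cases ha0 : a = 0
    · exact Or.inl ha0
    right
    have hd2s : d2 < s := by omega
    have hnQ : ¬ PerOn T q (s - (d2 + 1)) b :=
      Nat.findGreatest_is_greatest (P := Q') (n := s) (by omega) (by omega)
    have hnP : ¬ PerOn T q (a - 1) b := by
      rwa [show s - (d2 + 1) = a - 1 by omega] at hnQ
    unfold PerOn at hnP
    push_neg at hnP
    obtain ⟨i, hi1, hi2, hi3⟩ := hnP
    have hieq : i = a - 1 := by
      by_contra hne
      exact hi3 (hPera i (by omega) hi2)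
    rwa [hieq] at hi3
  -- min period of the extension
  have hab : a ≤ b := by omega
  have hfragper : IsPeriodOf q (frag T a b) := by
    rw [isPeriodOf_frag_iff hab hbT]
    exact ⟨hq0, by omega, hPera⟩
  have hfragne : frag T a b ≠ [] := by
    have hl := frag_length (a := a) hbT
    intro hcon
    rw [hcon] at hl
    simp at hl
    omega
  have hminab : minPeriod (frag T a b) = q := by
    have hle : minPeriod (frag T a b) ≤ q := minPeriod_le hfragper
    have hp := minPeriod_isPeriodOf hfragne
    rw [isPeriodOf_frag_iff hab hbT] at hp
    have hPerse : PerOn T (minPeriod (frag T a b)) s e := perOn_mono hp.2.2 has hbe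
    have hpe : IsPeriodOf (minPeriod (frag T a b)) (frag T s e) := by
      rw [isPeriodOf_frag_iff hse he]
      exact ⟨hp.1, by omega, hPerse⟩
    have := minPeriod_le hpe
    omega
  refine ⟨a, b, has, hbe, ?_, hminab, hPera⟩
  refine ⟨hab, hbT, ?_, ?_, ?_⟩
  · rw [hminab]; omega
  · rw [hminab]; exact hamax
  · rw [hminab]; exact hbmax

end AuxRun

section AuxClass
variable {α : Type*}

lemma frag_window {T : List α} {a b d L : ℕ} (hd : a + d + L ≤ b + 1) :
    ((frag T a b).drop d).take L = (T.drop (a + d)).take L := by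
  unfold frag
  rw [List.drop_take, List.drop_drop, List.take_take]
  congr 1
  omega

lemma rot_length_self (L : List α) : rot L.length L = L := by
  simp [rot]

lemma rot_mem_class [DecidableEq (List α)] {W z : List α} {q : ℕ} (hq : 0 < q) (hW : W.length = q)
    {c0 : ℕ} (hc0 : c0 ≤ q) (hz : z = rot c0 W) :
    z ∈ (Finset.range q).image (fun c => rot c W) := by
  subst hz
  rcases eq_or_lt_of_le hc0 with rfl | hlt
  · exact Finset.mem_image.mpr ⟨0, Finset.mem_range.mpr hq, by show rot 0 W = rot c0 W; rw [rot_zero, ← hW, rot_length_self]⟩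
  · exact Finset.mem_image.mpr ⟨c0, Finset.mem_range.mpr hlt, rfl⟩

lemma rot_class_eq [DecidableEq (List α)] {W W' : List α} {q : ℕ} (hq : 0 < q) (hW : W.length = q)
    (hW' : W'.length = q) {c0 : ℕ} (hc0 : c0 ≤ q) (h : W' = rot c0 W) :
    (Finset.range q).image (fun c => rot c W) = (Finset.range q).image (fun c => rot c W') := by
  have hWne : W ≠ [] := by intro hcon; rw [hcon] at hW; simp at hW; omega
  have hW'ne : W' ≠ [] := by intro hcon; rw [hcon] at hW'; simp at hW'; omega
  have hback : W = rot ((q - c0) % q) W' := by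
    have := rot_inv (L := W) (c := c0) (by omega) hWne
    rw [← h, hW] at this
    exact this.symm
  apply Finset.Subset.antisymm
  · intro z hz
    obtain ⟨c, hc, rfl⟩ := Finset.mem_image.mp hz
    rw [Finset.mem_range] at hc
    have : rot c W = rot ((c + (q - c0) % q) % q) W' := by
      rw [hback, rot_rot (by rw [hW']; exact le_of_lt (Nat.mod_lt _ hq)) (by rw [hW']; omega), hW']
    exact rot_mem_class hq hW' (le_of_lt (Nat.mod_lt _ hq)) this
  · intro z hz
    obtain ⟨c, hc, rfl⟩ := Finset.mem_image.mp hz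
    rw [Finset.mem_range] at hc
    have : rot c W' = rot ((c + c0) % q) W := by
      rw [h, rot_rot (by rw [hW]; exact hc0) (by rw [hW]; omega), hW]
    exact rot_mem_class hq hW (le_of_lt (Nat.mod_lt _ hq)) this

end AuxClass
section AuxTD
variable {α : Type*}

lemma period_take {S : List α} {p L : ℕ} (hp : IsPeriodOf p S) (hL : L ≤ S.length)
    (hpL : p ≤ L) : IsPeriodOf p (S.take L) := by
  have := window_period (S := S) (d := 0) (L := L) hp (by omega) hpL
  rwa [List.drop_zero] at this

lemma period_drop {S : List α} {p d : ℕ} (hp : IsPeriodOf p S) (hd : p + d ≤ S.length) :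
    IsPeriodOf p (S.drop d) := by
  have := window_period (S := S) (d := d) (L := S.length - d) hp (by omega) (by omega)
  rwa [show S.length - d = (S.drop d).length from (List.length_drop (i := d) (l := S)).symm,
    List.take_length] at this

end AuxTD


/-- A square `U²` occurring in `T` is special (primitive and highly periodic
root) iff it is generated by the intersection of a layer of some pyramid with
the union of its two defining runs, whose common period is `per(U)`. -/
theorem special_square_iff_pyramid [LinearOrder α] (T U : List α)
    (hU : U ≠ []) (hocc : (U ++ U) <:+: T) :
    (Primitive U ∧ 4 * minPeriod U ≤ U.length) ↔
    ∃ a b a' b' x y : ℕ, a < a' ∧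
      IsRun T a b ∧ IsRun T a' b' ∧ Neighboring a b a' b' ∧
      minPeriod (frag T a b) = minPeriod U ∧
      minPeriod (frag T a' b') = minPeriod U ∧
      (∃ lam : List α, LyndonRootOf (frag T a b) lam ∧
        LyndonRootOf (frag T a' b') lam) ∧
      IsLayer T a b a' b' x y ∧
      (U ++ U) <:+: frag T (max x a) (min y b') ∧
      minPeriod (U ++ U) = minPeriod (frag T (max x a) (min y b')) := by
  classical
  set n := U.length with hndef
  have hn0 : 0 < n := List.length_pos_iff.mpr hU
  have hUUne : U ++ U ≠ [] := by simp [hU]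
  have hUUlen : (U ++ U).length = 2 * n := by rw [List.length_append]; omega
  obtain ⟨s, hsT, hwin⟩ := infix_window hocc
  rw [hUUlen] at hsT hwin
  set q := minPeriod U with hqdef
  have hq0 : 0 < q := minPeriod_pos hU
  have hqn : q ≤ n := minPeriod_le_length hU
  constructor
  · -- forward
    rintro ⟨hprim, hhp⟩
    have hnq : 4 * q ≤ n := hhp
    have hUUmin : minPeriod (U ++ U) = n := (primitive_iff_minPeriod_sq hU).mp hprim
    have hUper : IsPeriodOf q U := minPeriod_isPeriodOf hU
    -- content identifications
    have hU1 : (T.drop s).take n = U := by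
      calc (T.drop s).take n = ((T.drop s).take (2*n)).take n := by
            rw [List.take_take]; congr 1; omega
        _ = (U ++ U).take n := by rw [hwin]
        _ = U := List.take_left' rfl
    have hU2 : (T.drop (s + n)).take n = U := by
      have hds : (T.drop s).drop n = T.drop (s + n) := List.drop_drop (i := n) (j := s) (l := T)
      have h4 := List.drop_take (i := n) (j := 2*n) (l := T.drop s)
      rw [hwin, hds, List.drop_left' rfl, show 2*n - n = n by omega] at h4
      exact h4.symm
    have hFragU : frag T s (s + n - 1) = U := by
      unfold frag; rw [show s + n - 1 + 1 - s = n by omega]; exact hU1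
    have hFragU' : frag T (s + n) (s + 2*n - 1) = U := by
      unfold frag; rw [show s + 2*n - 1 + 1 - (s + n) = n by omega]; exact hU2
    have hFragUU : frag T s (s + 2*n - 1) = U ++ U := by
      unfold frag; rw [show s + 2*n - 1 + 1 - s = 2*n by omega]; exact hwin
    -- three runs
    obtain ⟨a, b, haS, hbe, hrunF, hminF, hPerF⟩ :=
      exists_run_extension T s (s + n - 1) q (by omega) (by omega)
        (by rw [hFragU]; exact hUper) (by rw [hFragU]) (by omega)
    obtain ⟨a', b', ha'S, hb'e, hrunF', hminF', hPerF'⟩ :=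
      exists_run_extension T (s + n) (s + 2*n - 1) q (by omega) (by omega)
        (by rw [hFragU']; exact hUper) (by rw [hFragU']) (by omega)
    obtain ⟨x, y, hxS, hye, hrunR, hminR, hPerR⟩ :=
      exists_run_extension T s (s + 2*n - 1) n (by omega) (by omega)
        (by rw [hFragUU]; exact append_self_period hU) (by rw [hFragUU]; exact hUUmin) (by omega)
    have hab : a ≤ b := hrunF.1
    have hbT : b < T.length := hrunF.2.1
    have ha'b' : a' ≤ b' := hrunF'.1
    have hb'T : b' < T.length := hrunF'.2.1
    have hxy : x ≤ y := hrunR.1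
    have hyT : y < T.length := hrunR.2.1
    -- a < a'
    have haa' : a < a' := by
      by_contra hcon
      push_neg at hcon
      have hper : IsPeriodOf q (frag T s (s + 2*n - 1)) := by
        rw [isPeriodOf_frag_iff (by omega) (by omega)]
        exact ⟨hq0, by omega, perOn_mono hPerF' (by omega) (by omega)⟩
      rw [hFragUU] at hper
      have := minPeriod_le hper
      omega
    -- Lyndon roots
    have hFper : IsPeriodOf q (frag T a b) := by
      rw [isPeriodOf_frag_iff hab hbT]
      exact ⟨hq0, by omega, hPerF⟩
    have hF'per : IsPeriodOf q (frag T a' b') := by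
      rw [isPeriodOf_frag_iff ha'b' hb'T]
      exact ⟨hq0, by omega, hPerF'⟩
    have hWaeq : (frag T a b).take q = (T.drop a).take q := by
      unfold frag; rw [List.take_take]; congr 1; omega
    have hWa'eq : (frag T a' b').take q = (T.drop a').take q := by
      unfold frag; rw [List.take_take]; congr 1; omega
    have hWalen : ((frag T a b).take q).length = q := by
      rw [hWaeq]; exact window_length (by omega)
    have hWa'len : ((frag T a' b').take q).length = q := by
      rw [hWa'eq]; exact window_length (by omega)
    have hUqwinF : ((frag T a b).drop (s - a)).take q = U.take q := by
      rw [frag_window (by omega), show a + (s - a) = s by omega]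
      calc (T.drop s).take q = ((T.drop s).take n).take q := by
            rw [List.take_take]; congr 1; omega
        _ = U.take q := by rw [hU1]
    have hUqwinF' : ((frag T a' b').drop (s + n - a')).take q = U.take q := by
      rw [frag_window (by omega), show a' + (s + n - a') = s + n by omega]
      calc (T.drop (s + n)).take q = ((T.drop (s + n)).take n).take q := by
            rw [List.take_take]; congr 1; omega
        _ = U.take q := by rw [hU2]
    have hfragFlen : (frag T a b).length = b + 1 - a := frag_length hbT
    have hfragF'len : (frag T a' b').length = b' + 1 - a' := frag_length hb'T
    have hrotF : U.take q = rot ((s - a) % q) ((frag T a b).take q) := by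
      rw [← hUqwinF]
      exact window_eq_rot hFper (by rw [hfragFlen]; omega)
    have hrotF' : U.take q = rot ((s + n - a') % q) ((frag T a' b').take q) := by
      rw [← hUqwinF']
      exact window_eq_rot hF'per (by rw [hfragF'len]; omega)
    have hWane : (frag T a b).take q ≠ [] := by
      intro hcon; rw [hcon] at hWalen; simp at hWalen; omega
    -- (frag a' b').take q is a rotation of (frag a b).take q
    have hrotWa' : (frag T a' b').take q =
        rot (((q - (s + n - a') % q) % q + (s - a) % q) % q) ((frag T a b).take q) := by
      have h1 := rot_inv (L := (frag T a' b').take q) (c := (s + n - a') % q)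
        (by rw [hWa'len]; exact le_of_lt (Nat.mod_lt _ hq0)) (by
          intro hcon; rw [hcon] at hWa'len; simp at hWa'len; omega)
      rw [hWa'len, ← hrotF', hrotF] at h1
      rw [← h1, rot_rot (le_of_lt (by rw [hWalen]; exact Nat.mod_lt _ hq0))
        (by rw [hWalen]; exact le_of_lt (Nat.mod_lt _ hq0)), hWalen]
    set clsA := (Finset.range q).image (fun c => rot c ((frag T a b).take q)) with hclsA
    have hclsEq : clsA = (Finset.range q).image (fun c => rot c ((frag T a' b').take q)) :=
      rot_class_eq hq0 hWalen hWa'len (le_of_lt (Nat.mod_lt _ hq0)) hrotWa'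
    have hAne : clsA.Nonempty :=
      ⟨rot 0 ((frag T a b).take q), Finset.mem_image.mpr ⟨0, Finset.mem_range.mpr hq0, rfl⟩⟩
    set lam := clsA.min' hAne with hlam
    have hlynF : LyndonRootOf (frag T a b) lam := by
      constructor
      · obtain ⟨c, hc, hceq⟩ := Finset.mem_image.mp (Finset.min'_mem clsA hAne)
        exact ⟨c, by rw [hminF]; exact Finset.mem_range.mp hc, by rw [hminF]; exact hceq.symm⟩
      · intro c hc
        rw [hminF] at hc ⊢
        exact Finset.min'_le clsA _ (Finset.mem_image.mpr ⟨c, Finset.mem_range.mpr hc, rfl⟩)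
    have hlynF' : LyndonRootOf (frag T a' b') lam := by
      constructor
      · have hmemB : lam ∈ clsA := Finset.min'_mem clsA hAne
        rw [hclsEq] at hmemB
        obtain ⟨c, hc, hceq⟩ := Finset.mem_image.mp hmemB
        exact ⟨c, by rw [hminF']; exact Finset.mem_range.mp hc, by rw [hminF']; exact hceq.symm⟩
      · intro c hc
        rw [hminF'] at hc ⊢
        apply Finset.min'_le clsA _
        rw [hclsEq]
        exact Finset.mem_image.mpr ⟨c, Finset.mem_range.mpr hc, rfl⟩
    -- the layer R and the window W
    have hRper : IsPeriodOf n (frag T x y) := by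
      rw [isPeriodOf_frag_iff hxy hyT]
      exact ⟨hn0, by omega, hPerR⟩
    have hRlen : (frag T x y).length = y + 1 - x := frag_length hyT
    have hUUwinR : ((frag T x y).drop (s - x)).take (2*n) = U ++ U := by
      rw [frag_window (by omega), show x + (s - x) = s by omega]
      exact hwin
    have hUwinR : ((frag T x y).drop (s - x)).take n = U := by
      rw [frag_window (by omega), show x + (s - x) = s by omega]
      exact hU1
    -- subper (frag T x y) = q
    have hsubmem : q ∈ {p | ∃ X : List α, X ≠ [] ∧ (X ++ X) <:+: (frag T x y) ∧
        minPeriod (X ++ X) = minPeriod (frag T x y) ∧ minPeriod X = p} := by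
      refine ⟨U, hU, ?_, by rw [hUUmin, hminR], rfl⟩
      rw [← hUUwinR]
      apply window_infix
      rw [hRlen]; omega
    have hsublb : ∀ p, p ∈ {p | ∃ X : List α, X ≠ [] ∧ (X ++ X) <:+: (frag T x y) ∧
        minPeriod (X ++ X) = minPeriod (frag T x y) ∧ minPeriod X = p} → q ≤ p := by
      rintro p ⟨X, hX0, hXinf, hXsq, hXmin⟩
      by_contra hcon
      push_neg at hcon
      have hp0 : 0 < p := by rw [← hXmin]; exact minPeriod_pos hX0
      have hXlen : n ≤ X.length := by
        have h1 := minPeriod_sq_le hX0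
        rw [hXsq, hminR] at h1
        exact h1
      obtain ⟨d, hdlen, hdwin⟩ := infix_window hXinf
      have hXXlen : (X ++ X).length = 2 * X.length := by rw [List.length_append]; omega
      rw [hXXlen] at hdlen hdwin
      rw [hRlen] at hdlen
      have hVwin : ((frag T x y).drop d).take n = X.take n := by
        calc ((frag T x y).drop d).take n
            = (((frag T x y).drop d).take (2 * X.length)).take n := by
              rw [List.take_take]; congr 1; omega
          _ = (X ++ X).take n := by rw [hdwin]
          _ = X.take n := List.take_append_of_le_length (by omega)
      -- X.take n is a rotation of U
      have hRn : n ≤ (frag T x y).length := by rw [hRlen]; omega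
      have hrotX : ((frag T x y).drop d).take n = rot (d % n) ((frag T x y).take n) :=
        window_eq_rot hRper (by rw [hRlen]; omega)
      have hrotU : U = rot ((s - x) % n) ((frag T x y).take n) := by
        rw [← hUwinR]
        exact window_eq_rot hRper (by rw [hRlen]; omega)
      have hRnlen : ((frag T x y).take n).length = n := by
        rw [List.length_take]; omega
      have hRnne : (frag T x y).take n ≠ [] := by
        intro hcon2; rw [hcon2] at hRnlen; simp at hRnlen; omega
      have hRnrot : (frag T x y).take n = rot ((n - (s - x) % n) % n) U := by
        have h1 := rot_inv (L := (frag T x y).take n) (c := (s - x) % n)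
          (by rw [hRnlen]; exact le_of_lt (Nat.mod_lt _ hn0)) hRnne
        rw [hRnlen, ← hrotU] at h1
        exact h1.symm
      set c3 := ((d % n) + (n - (s - x) % n) % n) % n with hc3
      have hc3n : c3 < n := Nat.mod_lt _ hn0
      have hUlen_n : U.length = n := hndef.symm
      have hVrot : X.take n = rot c3 U := by
        rw [← hVwin, hrotX, hRnrot,
          rot_rot (by rw [hUlen_n]; exact le_of_lt (Nat.mod_lt _ hn0))
            (by rw [hUlen_n]; exact le_of_lt (Nat.mod_lt _ hn0)), hUlen_n, hc3]
      have hXper : IsPeriodOf p X := by rw [← hXmin]; exact minPeriod_isPeriodOf hX0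
      have hVper : IsPeriodOf p (X.take n) := period_take hXper (by omega) (by omega)
      have hVlen : (X.take n).length = n := by rw [List.length_take]; omega
      -- both parts of the rotation; one is long
      have hdroplen : (U.drop c3).length = n - c3 := by rw [List.length_drop, hUlen_n]
      have hcontra : q ≤ Nat.gcd p q := by
        by_cases hcase : 2 * q ≤ n - c3
        · -- long part is U.drop c3, a prefix of X.take n
          have hY : (X.take n).take (n - c3) = U.drop c3 := by
            rw [hVrot]
            show (U.drop c3 ++ U.take c3).take (n - c3) = U.drop c3
            exact List.take_left' hdroplen
          have hYp : IsPeriodOf p (U.drop c3) := by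
            have := period_take hVper (L := n - c3) (by omega) (by omega)
            rwa [hY] at this
          have hYtake : (U.drop c3).take (n - c3) = U.drop c3 := by
            rw [← hdroplen, List.take_length]
          have hYq : IsPeriodOf q (U.drop c3) := period_drop hUper (by omega)
          have hgcd := fine_wilf hYp hYq (by rw [hdroplen]; omega)
          have hg0 : 0 < Nat.gcd p q := Nat.gcd_pos_of_pos_right _ hq0
          have hgle : Nat.gcd p q ≤ p := Nat.le_of_dvd hp0 (Nat.gcd_dvd_left _ _)
          have hUg : IsPeriodOf (Nat.gcd p q) U :=
            period_of_window_period (d := c3) (L := n - c3) hUper hg0 (Nat.gcd_dvd_right _ _)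
              (by omega) (by omega) (by rwa [hYtake])
          exact minPeriod_le hUg
        · -- long part is U.take c3, a suffix of X.take n
          have hcase2 : 2 * q ≤ c3 := by omega
          have hY : (X.take n).drop (n - c3) = U.take c3 := by
            rw [hVrot]
            show (U.drop c3 ++ U.take c3).drop (n - c3) = U.take c3
            exact List.drop_left' hdroplen
          have htakelen : (U.take c3).length = c3 := by rw [List.length_take]; omega
          have hYtake : (U.take c3).take c3 = U.take c3 := by
            rw [List.take_take, min_self]
          have hYp : IsPeriodOf p (U.take c3) := by
            have := period_drop hVper (d := n - c3) (by omega)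
            rwa [hY] at this
          have hYq : IsPeriodOf q (U.take c3) := period_take hUper (by omega) (by omega)
          have hgcd := fine_wilf hYp hYq (by rw [htakelen]; omega)
          have hg0 : 0 < Nat.gcd p q := Nat.gcd_pos_of_pos_right _ hq0
          have hgle : Nat.gcd p q ≤ p := Nat.le_of_dvd hp0 (Nat.gcd_dvd_left _ _)
          have hUg : IsPeriodOf (Nat.gcd p q) U :=
            period_of_window_period (d := 0) (L := c3) hUper hg0 (Nat.gcd_dvd_right _ _)
              (by omega) (by omega) (by rw [List.drop_zero]; exact hgcd)
          exact minPeriod_le hUg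
      have hgle : Nat.gcd p q ≤ p := Nat.le_of_dvd hp0 (Nat.gcd_dvd_left _ _)
      omega
    have hsubper : subper (frag T x y) = q := by
      unfold subper
      exact le_antisymm (Nat.sInf_le hsubmem) (le_csInf ⟨q, hsubmem⟩ hsublb)
    -- the window W = frag T (max x a) (min y b')
    have hM : max x a ≤ s := by omega
    have hN : s + 2*n - 1 ≤ min y b' := by omega
    have hNT : min y b' < T.length := by omega
    have hMN : max x a ≤ min y b' := by omega
    have hWlen : (frag T (max x a) (min y b')).length = min y b' + 1 - max x a :=
      frag_length hNT
    have hUUwinW : ((frag T (max x a) (min y b')).drop (s - max x a)).take (2*n) = U ++ U := by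
      rw [frag_window (by omega), show max x a + (s - max x a) = s by omega]
      exact hwin
    have hWperN : IsPeriodOf n (frag T (max x a) (min y b')) := by
      rw [isPeriodOf_frag_iff hMN hNT]
      exact ⟨hn0, by omega, perOn_mono hPerR (by omega) (by omega)⟩
    have hWne : frag T (max x a) (min y b') ≠ [] := by
      intro hcon
      rw [hcon] at hWlen
      simp at hWlen
      omega
    have hWmin : minPeriod (frag T (max x a) (min y b')) = n := by
      have h1 : minPeriod (frag T (max x a) (min y b')) ≤ n := minPeriod_le hWperN
      have h2 := minPeriod_isPeriodOf hWne
      have h3 : IsPeriodOf (minPeriod (frag T (max x a) (min y b'))) (U ++ U) := by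
        have := window_period (d := s - max x a) (L := 2*n) h2
          (by rw [hWlen]; omega) (by omega)
        rwa [hUUwinW] at this
      have h4 := minPeriod_le h3
      rw [hUUmin] at h4
      omega
    refine ⟨a, b, a', b', x, y, haa', hrunF, hrunF', ⟨by omega, by omega⟩,
      hminF, hminF', ⟨lam, hlynF, hlynF'⟩,
      ⟨hrunR, ?_, ?_, ?_, ?_⟩, ?_, ?_⟩
    · rw [hsubper, hminR]; omega
    · rw [hsubper, hminF]
    · rw [hminR]; omega
    · rw [hminR]; exact hWperN
    · rw [← hUUwinW]
      apply window_infix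
      rw [hWlen]; omega
    · rw [hUUmin, hWmin]
  · -- backward
    rintro ⟨a, b, a', b', x, y, haa', hrunF, hrunF', hnb, hminFU, hminF'U, hlyn,
      ⟨hrunR, h4sub, hsubq, h2P, hWperP⟩, hUUinf, hUUminW⟩
    set P := minPeriod (frag T x y) with hPdef
    set M := max x a with hMdef
    set N := min y b' with hNdef
    have hxy : x ≤ y := hrunR.1
    have hyT : y < T.length := hrunR.2.1
    have hRlen : (frag T x y).length = y + 1 - x := frag_length hyT
    have hRne : frag T x y ≠ [] := by
      intro hcon; rw [hcon] at hRlen; simp at hRlen; omega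
    have hP0 : 0 < P := minPeriod_pos hRne
    have h4q : 4 * q ≤ P := by
      rw [hsubq, hminFU] at h4sub
      exact h4sub
    have hMx : x ≤ M := le_max_left _ _
    have hNy : N ≤ y := min_le_left _ _
    have hNT : N < T.length := by omega
    have hMN : M ≤ N := by
      by_contra hcon
      push_neg at hcon
      omega
    have hWlen : (frag T M N).length = N + 1 - M := frag_length hNT
    have h2PW : 2 * P ≤ N + 1 - M := h2P
    have hWne : frag T M N ≠ [] := by
      intro hcon; rw [hcon] at hWlen; simp at hWlen; omega
    set m := minPeriod (U ++ U) with hmdef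
    have hm0 : 0 < m := minPeriod_pos hUUne
    have hmW : IsPeriodOf m (frag T M N) := by
      rw [hUUminW]
      exact minPeriod_isPeriodOf hWne
    have hmleP : m ≤ P := by
      rw [hUUminW]
      exact minPeriod_le hWperP
    -- m divides P
    have hgcd1 := fine_wilf hmW hWperP (by rw [hWlen]; omega)
    have hmg : Nat.gcd m P = m := by
      have h1 : minPeriod (frag T M N) ≤ Nat.gcd m P := minPeriod_le hgcd1
      rw [← hUUminW] at h1
      have h2 : Nat.gcd m P ≤ m := Nat.le_of_dvd hm0 (Nat.gcd_dvd_left _ _)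
      omega
    have hmdvdP : m ∣ P := by
      rw [← hmg]
      exact Nat.gcd_dvd_right _ _
    -- transfer m-periodicity of the window to R, forcing m = P
    have hRper : IsPeriodOf P (frag T x y) := minPeriod_isPeriodOf hRne
    have hWwin : ((frag T x y).drop (M - x)).take (N + 1 - M) = frag T M N := by
      rw [frag_window (by omega), show x + (M - x) = M by omega]
      rfl
    have hPm : IsPeriodOf m (frag T x y) :=
      period_of_window_period (d := M - x) (L := N + 1 - M) hRper hm0 hmdvdP
        (by rw [hRlen]; omega) (by omega) (by rwa [hWwin])
    have hmP : m = P := by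
      have := minPeriod_le hPm
      omega
    -- m = |U|
    have hmlen : m ≤ n := minPeriod_sq_le hU
    have hUperm : IsPeriodOf m U :=
      period_of_sq_period hU (minPeriod_isPeriodOf hUUne) hmlen
    have hqlem : q ≤ m := minPeriod_le hUperm
    have hmdvdU : m ∣ n := minPeriod_sq_dvd hU
    have hmn : m = n := by
      by_contra hmU
      have h2m : 2 * m ≤ n := by
        obtain ⟨k, hk⟩ := hmdvdU
        have hk0 : k ≠ 0 := by rintro rfl; omega
        have hk1 : k ≠ 1 := by rintro rfl; omega
        calc 2 * m = m * 2 := by ring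
          _ ≤ m * k := Nat.mul_le_mul_left m (by omega)
          _ = n := hk.symm
      have hUq : IsPeriodOf q U := minPeriod_isPeriodOf hU
      have hg3 := fine_wilf hUq hUperm (by omega)
      have hg30 : 0 < Nat.gcd q m := Nat.gcd_pos_of_pos_right _ hm0
      have hg3q : Nat.gcd q m ≤ q := Nat.le_of_dvd hq0 (Nat.gcd_dvd_left _ _)
      have hg3dvd : Nat.gcd q m ∣ n := dvd_trans (Nat.gcd_dvd_right _ _) hmdvdU
      have hsq := sq_period_of_period_dvd hU hg3 hg3dvd
      have := minPeriod_le hsq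
      rw [← hmdef] at this
      omega
    exact ⟨(primitive_iff_minPeriod_sq hU).mpr hmn, by omega⟩
end

section
/- Let U be a periodic string with per(U) ≥ 2τ. If each of the positions i in the first per(U) positions of an occurrence of U in T such that the length-2τ fragment at i belongs to a fixed set of 'marked' length-2τ strings is well-defined consistently (i.e., membership depends only on T[i..i+2τ)), and the set of such positions within the first per(U) positions is non-empty, then the position i among them minimizing the suffix T[i..n) lexicographically determines a rotation T[i..i+per(U)) of the primitive root of U that depends only on the string U (not on its occurrence position). -/
open List

variable {α : Type*}

private lemma lex_append_of_length_eq {r : α → α → Prop} :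
    ∀ {A B : List α}, List.Lex r A B → A.length = B.length →
      ∀ (s t : List α), List.Lex r (A ++ s) (B ++ t) := by
  intro A B h
  induction h with
  | nil => intro hlen; simp at hlen
  | @cons a l₁ l₂ h ih =>
      intro hlen s t
      exact List.Lex.cons (ih (by simpa using hlen) s t)
  | rel h => intro _ s t; exact List.Lex.rel h

private lemma lt_of_take_lt [LinearOrder α] {X Y : List α} {n : ℕ}
    (hX : n ≤ X.length) (hY : n ≤ Y.length) (h : X.take n < Y.take n) : X < Y := by
  have h' : List.Lex (· < ·) (X.take n) (Y.take n) := h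
  have h2 := lex_append_of_length_eq h'
    (by simp [List.length_take, Nat.min_eq_left hX, Nat.min_eq_left hY])
    (X.drop n) (Y.drop n)
  rw [List.take_append_drop, List.take_append_drop] at h2
  exact h2

private lemma occ_frag (T U : List α) {s c m : ℕ} (ho : OccursAt T s U)
    (h : c + m ≤ U.length) : (T.drop (s + c)).take m = (U.drop c).take m := by
  obtain ⟨hle, heq⟩ := ho
  calc (T.drop (s + c)).take m
      = (T.drop (s + c)).take (m ⊓ (U.length - c)) := by
        rw [Nat.min_eq_left (by omega)]
    _ = ((T.drop (s + c)).take (U.length - c)).take m := by rw [List.take_take]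
    _ = (((T.drop s).drop c).take (U.length - c)).take m := by rw [List.drop_drop]
    _ = (((T.drop s).take U.length).drop c).take m := by rw [List.drop_take]
    _ = (U.drop c).take m := by rw [heq]

/-- Consistent marking determines a rotation of the primitive root: for two
occurrences of a periodic string `U` in `T`, the marked position in the first
`per(U)` positions minimizing the suffix lexicographically determines the same
length-`per(U)` rotation, provided markedness depends only on the length-`2τ`
fragment at the position. -/
theorem marked_min_suffix_rotation [LinearOrder α] (T U : List α)
    (τ : ℕ) (M : Set (List α)) (s₁ s₂ i₁ i₂ : ℕ)
    (hτ : 1 ≤ τ)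
    (hUper : 2 * minPeriod U ≤ U.length)
    (hp : 2 * τ ≤ minPeriod U)
    (ho₁ : OccursAt T s₁ U) (ho₂ : OccursAt T s₂ U)
    (hm₁ : (s₁ ≤ i₁ ∧ i₁ < s₁ + minPeriod U ∧ i₁ + 2 * τ ≤ T.length ∧
        (T.drop i₁).take (2 * τ) ∈ M) ∧
      ∀ j : ℕ, s₁ ≤ j → j < s₁ + minPeriod U → j + 2 * τ ≤ T.length →
        (T.drop j).take (2 * τ) ∈ M → T.drop i₁ ≤ T.drop j)
    (hm₂ : (s₂ ≤ i₂ ∧ i₂ < s₂ + minPeriod U ∧ i₂ + 2 * τ ≤ T.length ∧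
        (T.drop i₂).take (2 * τ) ∈ M) ∧
      ∀ j : ℕ, s₂ ≤ j → j < s₂ + minPeriod U → j + 2 * τ ≤ T.length →
        (T.drop j).take (2 * τ) ∈ M → T.drop i₂ ≤ T.drop j) :
    (T.drop i₁).take (minPeriod U) = (T.drop i₂).take (minPeriod U) := by
  set p := minPeriod U with hpdef
  obtain ⟨⟨hs₁, hi₁, hl₁, hM₁⟩, hmin₁⟩ := hm₁
  obtain ⟨⟨hs₂, hi₂, hl₂, hM₂⟩, hmin₂⟩ := hm₂
  have hT₁ : s₁ + U.length ≤ T.length := ho₁.1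
  have hT₂ : s₂ + U.length ≤ T.length := ho₂.1
  set c₁ := i₁ - s₁ with hc₁def
  set c₂ := i₂ - s₂ with hc₂def
  have hi₁' : i₁ = s₁ + c₁ := by omega
  have hi₂' : i₂ = s₂ + c₂ := by omega
  have hc₁ : c₁ < p := by omega
  have hc₂ : c₂ < p := by omega
  have hpU : p + p ≤ U.length := by omega
  -- length-p fragments at occurrences are fragments of U
  have f1 : ∀ s c, OccursAt T s U → c < p →
      (T.drop (s + c)).take p = (U.drop c).take p := by
    intro s c ho hc
    exact occ_frag T U ho (by omega)
  have f2 : ∀ s c, OccursAt T s U → c < p →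
      (T.drop (s + c)).take (2 * τ) = (U.drop c).take (2 * τ) := by
    intro s c ho hc
    exact occ_frag T U ho (by omega)
  rw [hi₁', hi₂', f1 s₁ c₁ ho₁ hc₁, f1 s₂ c₂ ho₂ hc₂]
  rcases lt_trichotomy ((U.drop c₁).take p) ((U.drop c₂).take p) with h | h | h
  · -- then: s₂ + c₁ is marked and smaller than i₂
    exfalso
    have hM : (T.drop (s₂ + c₁)).take (2 * τ) ∈ M := by
      rw [f2 s₂ c₁ ho₂ hc₁, ← f2 s₁ c₁ ho₁ hc₁, ← hi₁']
      exact hM₁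
    have hle : T.drop i₂ ≤ T.drop (s₂ + c₁) :=
      hmin₂ (s₂ + c₁) (by omega) (by omega) (by omega) hM
    have hlt : T.drop (s₂ + c₁) < T.drop (s₂ + c₂) := by
      apply lt_of_take_lt (n := p) (by rw [List.length_drop]; omega)
        (by rw [List.length_drop]; omega)
      rw [f1 s₂ c₂ ho₂ hc₂, f1 s₂ c₁ ho₂ hc₁]
      exact h
    rw [hi₂'] at hle
    exact absurd hle (not_le.2 hlt)
  · exact h
  · -- symmetric s₁ + c₂ is marked and gives a lexicographically smaller suffix than i₁
    exfalso
    have hM : (T.drop (s₁ + c₂)).take (2 * τ) ∈ M := by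
      rw [f2 s₁ c₂ ho₁ hc₂, ← f2 s₂ c₂ ho₂ hc₂, ← hi₂']
      exact hM₂
    have hle : T.drop i₁ ≤ T.drop (s₁ + c₂) :=
      hmin₁ (s₁ + c₂) (by omega) (by omega) (by omega) hM
    have hlt : T.drop (s₁ + c₂) < T.drop (s₁ + c₁) := by
      apply lt_of_take_lt (n := p) (by rw [List.length_drop]; omega)
        (by rw [List.length_drop]; omega)
      rw [f1 s₁ c₂ ho₁ hc₂, f1 s₁ c₁ ho₁ hc₁]
      exact h
    rw [hi₁'] at hle
    exact absurd hle (not_le.2 hlt)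
end
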